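/- Let (u,v) ∈ ℝ². There exist nonzero complex numbers x, y with x + y = 1, log|x| = u and log|y| = v if and only if exp u ≤ exp v + 1, exp v ≤ exp u + 1 and 1 ≤ exp u + exp v. -/

import Mathlib

open Real

/-- Description of the amoeba of the line `x + y = 1` in `(ℂ*)²`: a point `(u, v)` is in the
amoeba iff the three triangle inequalities hold for the side lengths `e^u`, `e^v`, `1`. -/
theorem amoeba_of_line (u v : ℝ) :
    (∃ x y : ℂ, x ≠ 0 ∧ y ≠ 0 ∧ x + y = 1 ∧
        Real.log ‖x‖ = u ∧ Real.log ‖y‖ = v)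
    ↔ (exp u ≤ exp v + 1 ∧ exp v ≤ exp u + 1 ∧ 1 ≤ exp u + exp v) := by
  constructor
  · rintro ⟨x, y, hx, hy, hxy, hu, hv⟩
    have hax : ‖x‖ > 0 := norm_pos_iff.mpr hx
    have hay : ‖y‖ > 0 := norm_pos_iff.mpr hy
    have heu : exp u = ‖x‖ := by rw [← hu, Real.exp_log hax]
    have hev : exp v = ‖y‖ := by rw [← hv, Real.exp_log hay]
    have h1 : ‖x‖ ≤ ‖y‖ + 1 := by
      have : x = 1 - y := by linear_combination hxy
      calc ‖x‖ = ‖1 - y‖ := by rw [this]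
        _ ≤ ‖(1 : ℂ)‖ + ‖y‖ := by
            simpa using norm_sub_le 1 y
        _ = ‖y‖ + 1 := by simp [add_comm]
    have h2 : ‖y‖ ≤ ‖x‖ + 1 := by
      have : y = 1 - x := by linear_combination hxy
      calc ‖y‖ = ‖1 - x‖ := by rw [this]
        _ ≤ ‖(1 : ℂ)‖ + ‖x‖ := by
            simpa using norm_sub_le 1 x
        _ = ‖x‖ + 1 := by simp [add_comm]
    have h3 : (1 : ℝ) ≤ ‖x‖ + ‖y‖ := by
      calc (1 : ℝ) = ‖x + y‖ := by rw [hxy]; simp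
        _ ≤ ‖x‖ + ‖y‖ := norm_add_le x y
    exact ⟨by rw [heu, hev]; exact h1, by rw [heu, hev]; exact h2, by rw [heu, hev]; exact h3⟩
  · rintro ⟨h1, h2, h3⟩
    set a := exp u with ha
    set b := exp v with hb
    have ha0 : 0 < a := exp_pos u
    have hb0 : 0 < b := exp_pos v
    set t : ℝ := (1 + a ^ 2 - b ^ 2) / 2 with ht
    have hkey : 0 ≤ a ^ 2 - t ^ 2 := by
      nlinarith [mul_nonneg (mul_nonneg (by linarith : (0:ℝ) ≤ b + a - 1)
        (by linarith : (0:ℝ) ≤ b - a + 1)) (by linarith : (0:ℝ) ≤ a + 1 - b),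
        (by positivity : (0:ℝ) < a + b + 1)]
    set s : ℝ := Real.sqrt (a ^ 2 - t ^ 2) with hs
    have hss : s ^ 2 = a ^ 2 - t ^ 2 := Real.sq_sqrt hkey
    refine ⟨⟨t, s⟩, 1 - ⟨t, s⟩, ?_, ?_, by ring, ?_, ?_⟩
    · intro h
      have : Complex.normSq ⟨t, s⟩ = 0 := by rw [h]; simp
      have hnsq : t * t + s * s = 0 := this
      nlinarith [hss, sq_nonneg t, sq_nonneg s]
    · intro h
      have h' : (⟨t, s⟩ : ℂ) = 1 := by linear_combination -h
      have hre : t = 1 := congrArg Complex.re h'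
      have him : s = 0 := congrArg Complex.im h'
      rw [him] at hss
      have : a ^ 2 = 1 := by nlinarith
      have : b ^ 2 = 0 := by rw [hre] at ht; nlinarith
      nlinarith
    · have habs : ‖(⟨t, s⟩ : ℂ)‖ = a := by
        rw [Complex.norm_def, Complex.normSq_mk]
        have : t * t + s * s = a ^ 2 := by nlinarith [hss]
        rw [this]
        exact Real.sqrt_sq ha0.le
      rw [habs, ha, Real.log_exp]
    · have habs : ‖(1 - ⟨t, s⟩ : ℂ)‖ = b := by
        have h1' : (1 - (⟨t, s⟩ : ℂ)) = ⟨1 - t, -s⟩ := by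
          apply Complex.ext <;> simp
        rw [h1', Complex.norm_def, Complex.normSq_mk]
        have : (1 - t) * (1 - t) + -s * -s = b ^ 2 := by
          have : s ^ 2 = a ^ 2 - t ^ 2 := hss
          field_simp [ht] at *
          nlinarith [hss]
        rw [this]
        exact Real.sqrt_sq hb0.le
      rw [habs, hb, Real.log_exp]
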